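/- Let n > k and d ≤ n-k+1. There exists a binary linear [n,k,d] code if and only if there exists an (n-k)×k binary matrix A = (β₁ᵀ,...,β_kᵀ) with β_i ∈ {0,1}^{n-k} such that for every pair of nonnegative integers d₁, d₂ with d₁ + d₂ = d - 1, after removing any d₂ rows from A, every d₁ columns of the remaining matrix are linearly independent over F₂. -/

import Mathlib

lemma wt_le_of_support_subset {n : ℕ} (y : Fin n → ZMod 2) (U : Finset (Fin n))
    (h : ∀ j, y j ≠ 0 → j ∈ U) : hammingNorm y ≤ U.card :=
  Finset.card_le_card fun j hj => h j (Finset.mem_filter.mp hj).2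

lemma wt_ge_of_subset_support {n : ℕ} (y : Fin n → ZMod 2) (U : Finset (Fin n))
    (h : ∀ j ∈ U, y j ≠ 0) : U.card ≤ hammingNorm y :=
  Finset.card_le_card fun j hj => Finset.mem_filter.mpr ⟨Finset.mem_univ j, h j hj⟩

lemma stmt3_back (n k d : ℕ) (hk : k < n) (hd : d ≤ n - k + 1)
    (A : Matrix (Fin (n - k)) (Fin k) (ZMod 2))
    (hA : ∀ d₁ d₂ : ℕ, d₁ + d₂ = d - 1 →
          ∀ R : Finset (Fin (n - k)), R.card = d₂ →
            ∀ S : Finset (Fin k), S.card = d₁ →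
              LinearIndependent (ZMod 2)
                (fun j : S => fun i : {i : Fin (n - k) // i ∉ R} => A i.1 j.1)) :
    ∃ G : Matrix (Fin k) (Fin n) (ZMod 2),
        ∀ x : Fin k → ZMod 2, x ≠ 0 → d ≤ hammingNorm (Matrix.vecMul x G) := by
  classical
  set G : Matrix (Fin k) (Fin n) (ZMod 2) := Matrix.of fun (i : Fin k) (j : Fin n) =>
    if h : (j : ℕ) < k then (if i = ⟨(j : ℕ), h⟩ then (1 : ZMod 2) else 0)
    else A ⟨(j : ℕ) - k, by have := j.isLt; omega⟩ i with hGdef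
  refine ⟨G, fun x hx => ?_⟩
  set y := Matrix.vecMul x G with hy
  have hyapp : ∀ j : Fin n, y j = ∑ i : Fin k, x i * G i j := by
    intro j; simp [hy, Matrix.vecMul, dotProduct]
  -- embeddings
  have hkn : k ≤ n := hk.le
  set e : Fin k → Fin n := fun i => ⟨(i : ℕ), lt_of_lt_of_le i.isLt hkn⟩ with he
  set f : Fin (n - k) → Fin n := fun r => ⟨k + (r : ℕ), by have := r.isLt; omega⟩ with hf
  have hein : Function.Injective e := by
    intro a b hab
    have := congrArg Fin.val hab
    simp only [he] at this
    exact Fin.ext this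
  have hfin : Function.Injective f := by
    intro a b hab
    have := congrArg Fin.val hab
    simp only [hf] at this
    exact Fin.ext (by omega)
  have hye : ∀ i : Fin k, y (e i) = x i := by
    intro i
    rw [hyapp]
    have h1 : ∀ i' : Fin k, x i' * G i' (e i) = if i' = i then x i' else 0 := by
      intro i'
      have hlt : ((e i : Fin n) : ℕ) < k := i.isLt
      simp only [hGdef, Matrix.of_apply, dif_pos hlt]
      have : (⟨((e i : Fin n) : ℕ), hlt⟩ : Fin k) = i := rfl
      rw [this]
      by_cases h : i' = i <;> simp [h]
    simp only [h1]
    simp [Finset.sum_ite_eq']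
  have hyf : ∀ r : Fin (n - k), y (f r) = A.mulVec x r := by
    intro r
    rw [hyapp]
    have hnlt : ¬ ((f r : Fin n) : ℕ) < k := by simp [hf]
    have hidx : (⟨((f r : Fin n) : ℕ) - k, by have := (f r).isLt; omega⟩ : Fin (n - k)) = r := by
      apply Fin.ext; simp [hf]
    simp only [hGdef, Matrix.of_apply, dif_neg hnlt, hidx, Matrix.mulVec, dotProduct]
    exact Finset.sum_congr rfl fun i _ => mul_comm _ _
  set S : Finset (Fin k) := Finset.univ.filter fun i => x i ≠ 0 with hS
  set T : Finset (Fin (n - k)) := Finset.univ.filter fun r => A.mulVec x r ≠ 0 with hT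
  have hSne : S.Nonempty := by
    obtain ⟨i, hi⟩ := Function.ne_iff.mp hx
    exact ⟨i, Finset.mem_filter.mpr ⟨Finset.mem_univ _, hi⟩⟩
  by_cases hcase : d ≤ S.card + T.card
  · -- lower bound via union of images
    have hsub : S.image e ∪ T.image f ⊆ Finset.univ.filter fun j => y j ≠ 0 := by
      intro j hj
      rcases Finset.mem_union.mp hj with hj | hj
      · obtain ⟨i, hi, rfl⟩ := Finset.mem_image.mp hj
        exact Finset.mem_filter.mpr ⟨Finset.mem_univ _, by rw [hye]; exact (Finset.mem_filter.mp hi).2⟩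
      · obtain ⟨r, hr, rfl⟩ := Finset.mem_image.mp hj
        exact Finset.mem_filter.mpr ⟨Finset.mem_univ _, by rw [hyf]; exact (Finset.mem_filter.mp hr).2⟩
    have hdisj : Disjoint (S.image e) (T.image f) := by
      rw [Finset.disjoint_left]
      intro j hj1 hj2
      obtain ⟨i, _, rfl⟩ := Finset.mem_image.mp hj1
      obtain ⟨r, _, hr⟩ := Finset.mem_image.mp hj2
      have h1 : ((e i : Fin n) : ℕ) < k := i.isLt
      have h2 : ¬ ((f r : Fin n) : ℕ) < k := by simp [hf]
      rw [← hr] at h1; exact h2 h1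
    calc d ≤ S.card + T.card := hcase
      _ = (S.image e ∪ T.image f).card := by
          rw [Finset.card_union_of_disjoint hdisj, Finset.card_image_of_injective _ hein,
            Finset.card_image_of_injective _ hfin]
      _ ≤ hammingNorm y := Finset.card_le_card hsub
  · -- contradiction branch
    exfalso
    push_neg at hcase
    have h1 : 1 ≤ S.card := Finset.card_pos.mpr hSne
    have hTle : T.card ≤ d - 1 - S.card := by omega
    obtain ⟨R, hTR, -, hRcard⟩ := Finset.exists_subsuperset_card_eq (Finset.subset_univ T)
      hTle (by simp [Finset.card_univ]; omega)
    have hsum : S.card + (d - 1 - S.card) = d - 1 := by omega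
    have hli := hA S.card (d - 1 - S.card) hsum R hRcard S rfl
    rw [Fintype.linearIndependent_iff] at hli
    have hzero := hli (fun j => x j.1) ?_
    · obtain ⟨i, hi⟩ := hSne
      exact (Finset.mem_filter.mp hi).2 (hzero ⟨i, hi⟩)
    · funext i
      have hiR : i.1 ∉ T := fun h => i.2 (hTR h)
      have hAx : A.mulVec x i.1 = 0 := by
        by_contra h
        exact hiR (Finset.mem_filter.mpr ⟨Finset.mem_univ _, h⟩)
      rw [Finset.sum_apply]
      simp only [Pi.smul_apply, smul_eq_mul, Pi.zero_apply]
      have hcoe : ∑ j : S, x j.1 * A i.1 j.1 = ∑ j ∈ S, x j * A i.1 j :=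
        Finset.sum_coe_sort S (fun j => x j * A i.1 j)
      rw [hcoe]
      have hfull : ∑ j ∈ S, x j * A i.1 j = ∑ j : Fin k, x j * A i.1 j := by
        apply Finset.sum_subset (Finset.subset_univ S)
        intro j _ hj
        have : x j = 0 := by
          by_contra h
          exact hj (Finset.mem_filter.mpr ⟨Finset.mem_univ _, h⟩)
        simp [this]
      rw [hfull]
      have : ∑ j : Fin k, x j * A i.1 j = A.mulVec x i.1 := by
        simp [Matrix.mulVec, dotProduct, mul_comm]
      rw [this, hAx]

lemma wt_le_of_support_subset' {n : ℕ} (y : Fin n → ZMod 2) (U : Finset (Fin n))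
    (h : ∀ j, y j ≠ 0 → j ∈ U) : hammingNorm y ≤ U.card :=
  Finset.card_le_card fun j hj => h j (Finset.mem_filter.mp hj).2

lemma stmt3_fwd (n k d : ℕ) (hk : k < n) (hd : d ≤ n - k + 1)
    (G : Matrix (Fin k) (Fin n) (ZMod 2))
    (hG : ∀ x : Fin k → ZMod 2, x ≠ 0 → d ≤ hammingNorm (Matrix.vecMul x G)) :
    ∃ A : Matrix (Fin (n - k)) (Fin k) (ZMod 2),
        ∀ d₁ d₂ : ℕ, d₁ + d₂ = d - 1 →
          ∀ R : Finset (Fin (n - k)), R.card = d₂ →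
            ∀ S : Finset (Fin k), S.card = d₁ →
              LinearIndependent (ZMod 2)
                (fun j : S => fun i : {i : Fin (n - k) // i ∉ R} => A i.1 j.1) := by
  classical
  rcases Nat.eq_zero_or_pos d with hd0 | hdpos
  · -- d = 0 : condition is vacuous
    refine ⟨0, fun d₁ d₂ hsum R hR S hS => ?_⟩
    have hS0 : S = ∅ := Finset.card_eq_zero.mp (by omega)
    subst hS0
    have : IsEmpty ((∅ : Finset (Fin k)) : Type) := by
      constructor; rintro ⟨x, hx⟩; exact absurd hx (Finset.notMem_empty x)
    exact linearIndependent_empty_type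
  · -- d ≥ 1
    have hne : ∀ x : Fin k → ZMod 2, x ≠ 0 → Matrix.vecMul x G ≠ 0 := by
      intro x hx h0
      have := hG x hx
      rw [h0] at this
      simp [hammingNorm] at this
      omega
    have hinj : Function.Injective fun v => Matrix.vecMul v G := by
      intro a b hab
      by_contra hne'
      apply hne (a - b) (sub_ne_zero.mpr hne')
      rw [Matrix.sub_vecMul]
      simp only at hab
      rw [hab, sub_self]
    have hrows : LinearIndependent (ZMod 2) fun i => G i := Matrix.vecMul_injective_iff.mp hinj
    have hspan : Submodule.span (ZMod 2) (Set.range G.transpose) = ⊤ := by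
      apply Submodule.eq_top_of_finrank_eq
      have h1 : G.rank = Module.finrank (ZMod 2)
          (Submodule.span (ZMod 2) (Set.range G.transpose)) := Matrix.rank_eq_finrank_span_cols G
      have h2 : G.transpose.rank = G.rank := Matrix.rank_transpose G
      have h3 : G.transpose.rank = Module.finrank (ZMod 2)
          (Submodule.span (ZMod 2) (Set.range G.transpose.transpose)) :=
        Matrix.rank_eq_finrank_span_cols G.transpose
      rw [Matrix.transpose_transpose] at h3
      have h4 : Module.finrank (ZMod 2) (Submodule.span (ZMod 2) (Set.range G)) = k := by
        rw [finrank_span_eq_card hrows, Fintype.card_fin]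
      rw [← h1, ← h2, h3, h4, Module.finrank_fin_fun]
    obtain ⟨b, hbsub, hbspan, hbli⟩ :=
      exists_linearIndependent (ZMod 2) (Set.range G.transpose)
    have hbtop : Submodule.span (ZMod 2) b = ⊤ := by rw [hbspan, hspan]
    -- choose indices for the basis columns
    set φ : b → Fin n := fun v => (hbsub v.2).choose with hφdef
    have hφ : ∀ v : b, G.transpose (φ v) = v := fun v => (hbsub v.2).choose_spec
    set tF : Finset (Fin n) := Set.Finite.toFinset (Set.toFinite (Set.range φ)) with htFdef
    have hmemt : ∀ j, j ∈ tF ↔ ∃ v : b, φ v = j := by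
      intro j; rw [htFdef, Set.Finite.mem_toFinset]; exact Iff.rfl
    have hmem : ∀ j ∈ tF, G.transpose j ∈ b := by
      intro j hj
      obtain ⟨v, hv⟩ := (hmemt j).mp hj
      rw [← hv, hφ v]; exact v.2
    set ψ : tF → b := fun j => ⟨G.transpose j.1, hmem j.1 j.2⟩ with hψdef
    have hψinj : Function.Injective ψ := by
      intro j₁ j₂ h
      have hval : G.transpose j₁.1 = G.transpose j₂.1 := congrArg Subtype.val h
      obtain ⟨v₁, hv₁⟩ := (hmemt j₁.1).mp j₁.2
      obtain ⟨v₂, hv₂⟩ := (hmemt j₂.1).mp j₂.2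
      have : v₁ = v₂ := by
        apply Subtype.ext
        rw [← hφ v₁, ← hφ v₂, hv₁, hv₂]
        exact hval
      apply Subtype.ext
      rw [← hv₁, ← hv₂, this]
    have liT : LinearIndependent (ZMod 2) (fun j : tF => G.transpose j.1) :=
      hbli.comp ψ hψinj
    have hrange : Set.range (fun j : tF => G.transpose j.1) = b := by
      ext v
      constructor
      · rintro ⟨j, rfl⟩; exact hmem j.1 j.2
      · intro hv
        refine ⟨⟨φ ⟨v, hv⟩, (hmemt _).mpr ⟨⟨v, hv⟩, rfl⟩⟩, ?_⟩
        exact hφ ⟨v, hv⟩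
    have basis : Module.Basis tF (ZMod 2) (Fin k → ZMod 2) :=
      Module.Basis.mk liT (by rw [hrange, hbtop])
    have htFcard : tF.card = k := by
      have h5 := Module.finrank_eq_card_basis basis
      rw [Module.finrank_fin_fun, Fintype.card_coe] at h5
      exact h5.symm
    have hcompl : tFᶜ.card = n - k := by
      rw [Finset.card_compl, htFcard, Fintype.card_fin]
    set eE := tF.orderEmbOfFin htFcard with heEdef
    set cE := tFᶜ.orderEmbOfFin hcompl with hcEdef
    have heMem : ∀ c, eE c ∈ tF := fun c => Finset.orderEmbOfFin_mem tF htFcard c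
    set M : Matrix (Fin k) (Fin k) (ZMod 2) := Matrix.of fun i c => G i (eE c) with hMdef
    have hMcols : LinearIndependent (ZMod 2) (fun c => M.transpose c) := by
      have : (fun c : Fin k => M.transpose c)
          = (fun j : tF => G.transpose j.1) ∘ (fun c => (⟨eE c, heMem c⟩ : tF)) := rfl
      rw [this]
      exact liT.comp _ (fun a b hab => eE.injective (congrArg Subtype.val hab))
    have hMunit : IsUnit M := Matrix.linearIndependent_cols_iff_isUnit.mp hMcols
    have hMdet : IsUnit M.det := (Matrix.isUnit_iff_isUnit_det M).mp hMunit
    set G' : Matrix (Fin k) (Fin n) (ZMod 2) := M⁻¹ * G with hG'def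
    have hG' : ∀ x : Fin k → ZMod 2, x ≠ 0 → d ≤ hammingNorm (Matrix.vecMul x G') := by
      intro x hx
      have hxM : Matrix.vecMul x M⁻¹ ≠ 0 := by
        intro h0
        apply hx
        have h1 : Matrix.vecMul (Matrix.vecMul x M⁻¹) M = Matrix.vecMul (0 : Fin k → ZMod 2) M := by
          rw [h0]
        rw [Matrix.vecMul_vecMul, Matrix.nonsing_inv_mul M hMdet, Matrix.vecMul_one,
          Matrix.zero_vecMul] at h1
        exact h1
      have : Matrix.vecMul x G' = Matrix.vecMul (Matrix.vecMul x M⁻¹) G := by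
        rw [hG'def, Matrix.vecMul_vecMul]
      rw [this]
      exact hG _ hxM
    have hId : ∀ (i c : Fin k), G' i (eE c) = (1 : Matrix (Fin k) (Fin k) (ZMod 2)) i c := by
      intro i c
      have h1 : G' i (eE c) = (M⁻¹ * M) i c := by
        rw [hG'def, Matrix.mul_apply, Matrix.mul_apply]
        rfl
      rw [h1, Matrix.nonsing_inv_mul M hMdet]
    set A : Matrix (Fin (n - k)) (Fin k) (ZMod 2) := Matrix.of fun r i => G' i (cE r) with hAdef
    refine ⟨A, fun d₁ d₂ hsum R hR S hS => ?_⟩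
    rw [Fintype.linearIndependent_iff]
    intro g hg
    by_contra hng
    push_neg at hng
    obtain ⟨j₀, hj₀⟩ := hng
    set x : Fin k → ZMod 2 := fun i => if h : i ∈ S then g ⟨i, h⟩ else 0 with hxdef
    have hx : x ≠ 0 := by
      intro h0
      apply hj₀
      have := congrFun h0 j₀.1
      simpa [hxdef, j₀.2] using this
    have hwt := hG' x hx
    set y := Matrix.vecMul x G' with hydef
    have hyapp : ∀ j : Fin n, y j = ∑ i : Fin k, x i * G' i j := by
      intro j; simp [hydef, Matrix.vecMul, dotProduct]
    set U : Finset (Fin n) := S.image (fun s => eE s) ∪ R.image (fun r => cE r) with hUdef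
    have hsupp : ∀ j, y j ≠ 0 → j ∈ U := by
      intro j hj
      by_cases hjt : j ∈ tF
      · have : j ∈ Set.range eE := by
          rw [Finset.range_orderEmbOfFin]; exact hjt
        obtain ⟨c, rfl⟩ := this
        have hval : y (eE c) = x c := by
          rw [hyapp]
          simp only [hId, Matrix.one_apply]
          simp [mul_ite, Finset.sum_ite_eq']
        rw [hval] at hj
        have hcS : c ∈ S := by
          by_contra h
          exact hj (by simp [hxdef, h])
        exact Finset.mem_union_left _ (Finset.mem_image_of_mem _ hcS)
      · have hjc : j ∈ tFᶜ := Finset.mem_compl.mpr hjt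
        have : j ∈ Set.range cE := by
          rw [Finset.range_orderEmbOfFin]; exact hjc
        obtain ⟨r, rfl⟩ := this
        have hval : y (cE r) = ∑ i : Fin k, x i * A r i := by
          rw [hyapp]; rfl
        have hrR : r ∈ R := by
          by_contra hr
          apply hj
          rw [hval]
          have hval2 : ∑ i : Fin k, x i * A r i = ∑ i ∈ S, x i * A r i := by
            symm
            apply Finset.sum_subset (Finset.subset_univ S)
            intro i _ hiS
            simp [hxdef, hiS]
          have hval3 : ∑ i ∈ S, x i * A r i = ∑ i : S, g i * A r i.1 := by
            rw [← Finset.sum_coe_sort S (fun i => x i * A r i)]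
            apply Finset.sum_congr rfl
            intro i _
            simp [hxdef, i.2]
          have hval4 := congrFun hg ⟨r, hr⟩
          rw [Finset.sum_apply] at hval4
          simp only [Pi.smul_apply, smul_eq_mul, Pi.zero_apply] at hval4
          rw [hval2, hval3]
          exact hval4
        exact Finset.mem_union_right _ (Finset.mem_image_of_mem _ hrR)
    have hub : hammingNorm y ≤ d₁ + d₂ := by
      calc hammingNorm y ≤ U.card := wt_le_of_support_subset' y U hsupp
        _ ≤ (S.image (fun s => eE s)).card + (R.image (fun r => cE r)).card :=
            Finset.card_union_le _ _
        _ ≤ S.card + R.card := by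
            gcongr <;> exact Finset.card_image_le
        _ = d₁ + d₂ := by rw [hS, hR]
    omega



/-- For n > k and d ≤ n-k+1: a binary linear [n,k,d] code exists iff there is an
(n-k)×k binary matrix A such that for all d₁+d₂ = d-1, after removing any d₂ rows of A,
every d₁ columns of the remaining matrix are linearly independent over F₂. -/
theorem stmt3 (n k d : ℕ) (hk : k < n) (hd : d ≤ n - k + 1) :
    (∃ G : Matrix (Fin k) (Fin n) (ZMod 2),
        ∀ x : Fin k → ZMod 2, x ≠ 0 → d ≤ hammingNorm (Matrix.vecMul x G)) ↔
      (∃ A : Matrix (Fin (n - k)) (Fin k) (ZMod 2),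
        ∀ d₁ d₂ : ℕ, d₁ + d₂ = d - 1 →
          ∀ R : Finset (Fin (n - k)), R.card = d₂ →
            ∀ S : Finset (Fin k), S.card = d₁ →
              LinearIndependent (ZMod 2)
                (fun j : S => fun i : {i : Fin (n - k) // i ∉ R} => A i.1 j.1)) := by
  constructor
  · rintro ⟨G, hG⟩
    exact stmt3_fwd n k d hk hd G hG
  · rintro ⟨A, hA⟩
    exact stmt3_back n k d hk hd A hA
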